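/- For all polynomials K_1, K_2 : ℝ^{2n} × ℝ^{2n} → ℂ, the integral ∫_{ℝ^{2n}} K_1(Z, W) 𝒫(Z, W) K_2(W, Z') 𝒫(W, Z') dW converges absolutely for all Z, Z' ∈ ℝ^{2n}, and there exists a polynomial K_3 : ℝ^{2n} × ℝ^{2n} → ℂ with deg K_3 ≤ deg K_1 + deg K_2 such that ∫_{ℝ^{2n}} K_1(Z, W) 𝒫(Z, W) K_2(W, Z') 𝒫(W, Z') dW = K_3(Z, Z') 𝒫(Z, Z') for all Z, Z'. (Hence the set of kernels of the form K(Z,Z')𝒫(Z,Z') with K polynomial is a filtered algebra under composition of integral operators.) -/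

import Mathlib

open MeasureTheory

noncomputable section

/-- The complex coordinate `z_k = Z_{2k−1} + i Z_{2k}` (1-based indexing). -/
def zc {n : ℕ} (Z : Fin (2*n) → ℝ) (k : Fin n) : ℂ :=
  Complex.ofReal (Z ⟨2 * k.val, by have := k.isLt; omega⟩) +
    Complex.I * Complex.ofReal (Z ⟨2 * k.val + 1, by have := k.isLt; omega⟩)

/-- The Bergman kernel
`𝒫(Z,Z') = (2π)^{-n} (Π_j a_j) exp(−(1/4) Σ_k a_k (|z_k|² + |z'_k|² − 2 z_k conj z'_k))`. -/
def berg {n : ℕ} (a : Fin n → ℝ) (Z Z' : Fin (2*n) → ℝ) : ℂ :=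
  (((2 * Real.pi) ^ n : ℝ) : ℂ)⁻¹ * (∏ j, ((a j : ℝ) : ℂ)) *
    Complex.exp (-(1/4 : ℂ) * ∑ k, ((a k : ℝ) : ℂ) *
      (((Complex.normSq (zc Z k) : ℝ) : ℂ) + ((Complex.normSq (zc Z' k) : ℝ) : ℂ) -
        2 * zc Z k * (starRingEnd ℂ) (zc Z' k)))

/-- Evaluation of a polynomial in the `4n` real variables `(Z, Z')` (with complex
coefficients) at a pair of points of `ℝ^{2n}`. -/
def evalP {n : ℕ} (K : MvPolynomial (Fin (2*n) ⊕ Fin (2*n)) ℂ)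
    (Z Z' : Fin (2*n) → ℝ) : ℂ :=
  MvPolynomial.eval (Sum.elim (fun j => ((Z j : ℝ) : ℂ)) (fun j => ((Z' j : ℝ) : ℂ))) K

open Complex Filter Set Topology

namespace S16


/-- Recursive family of polynomials giving Gaussian moments. -/
def Qp (α : ℝ) : ℕ → Polynomial ℂ
  | 0 => 1
  | 1 => Polynomial.C ((2 * (α:ℂ)))⁻¹ * Polynomial.X
  | (p+2) => Polynomial.C ((2 * (α:ℂ)))⁻¹ *
      (Polynomial.X * Qp α (p+1) + Polynomial.C ((p:ℂ)+1) * Qp α p)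

lemma Qp_natDegree (α : ℝ) (p : ℕ) : (Qp α p).natDegree ≤ p := by
  induction p using Nat.strong_induction_on with
  | _ p ih =>
    match p with
    | 0 => simp [Qp]
    | 1 =>
      refine Polynomial.natDegree_mul_le.trans ?_
      rw [Polynomial.natDegree_C]
      simpa using Polynomial.natDegree_X_le
    | (q+2) =>
      have h1 := ih (q+1) (by omega)
      have h0 := ih q (by omega)
      rw [Qp]
      refine Polynomial.natDegree_mul_le.trans ?_
      rw [Polynomial.natDegree_C, zero_add]
      refine (Polynomial.natDegree_add_le _ _).trans ?_
      have hx : (Polynomial.X : Polynomial ℂ).natDegree ≤ 1 := Polynomial.natDegree_X_le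
      have hA : (Polynomial.X * Qp α (q+1)).natDegree ≤ q + 2 :=
        Polynomial.natDegree_mul_le.trans (by omega)
      have hB : (Polynomial.C ((q:ℂ)+1) * Qp α q).natDegree ≤ q + 2 :=
        Polynomial.natDegree_mul_le.trans (by rw [Polynomial.natDegree_C]; omega)
      omega

lemma re_arg (α : ℝ) (β : ℂ) (u : ℝ) : (-(α:ℂ) * u^2 + β * u).re = -α * u^2 + β.re * u := by
  rw [show (-(α:ℂ) * u^2 + β * u) = ((-α * u^2 : ℝ) : ℂ) + β * u by push_cast; ring]
  rw [Complex.add_re, Complex.ofReal_re, Complex.mul_re, Complex.ofReal_re, Complex.ofReal_im]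
  ring

lemma norm_term (p : ℕ) (α : ℝ) (β : ℂ) (u : ℝ) :
    ‖(u:ℂ)^p * Complex.exp (-(α:ℂ) * u^2 + β * u)‖
      = |u|^p * Real.exp (-α * u^2 + β.re * u) := by
  rw [norm_mul, norm_pow, Complex.norm_real, Real.norm_eq_abs,
    Complex.norm_exp, re_arg]

lemma real_exp_quad_integrable (α : ℝ) (hα : 0 < α) (c : ℝ) :
    Integrable (fun u : ℝ => Real.exp (-α * u^2 + c * u)) := by
  have h := (integrable_cexp_quadratic (b := (α:ℂ)) (by simpa using hα) (c:ℂ) 0).norm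
  refine h.congr (Eventually.of_forall fun u => ?_)
  show ‖Complex.exp _‖ = _
  rw [Complex.norm_exp, add_zero, re_arg]
  simp

lemma norm_bound (p : ℕ) (α : ℝ) (β : ℂ) (u : ℝ) :
    ‖(u:ℂ)^p * Complex.exp (-(α:ℂ) * u^2 + β * u)‖
      ≤ (p.factorial : ℝ) * (Real.exp (-α * u^2 + (β.re+1) * u)
          + Real.exp (-α * u^2 + (β.re-1) * u)) := by
  rw [norm_term]
  have h1 : |u|^p ≤ (p.factorial : ℝ) * Real.exp |u| := by
    have h := Real.pow_div_factorial_le_exp _ (abs_nonneg u) p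
    rw [div_le_iff₀ (by positivity)] at h
    linarith [h]
  have h2 : |u|^p * Real.exp (-α * u^2 + β.re * u)
      ≤ (p.factorial : ℝ) * (Real.exp |u| * Real.exp (-α * u^2 + β.re * u)) := by
    rw [← mul_assoc]
    exact mul_le_mul_of_nonneg_right (by linarith) (Real.exp_nonneg _)
  refine h2.trans ?_
  rw [← Real.exp_add]
  rcases abs_cases u with ⟨he, _⟩ | ⟨he, _⟩ <;> rw [he]
  · rw [show u + (-α * u^2 + β.re * u) = -α*u^2 + (β.re+1)*u by ring]
    have := Real.exp_nonneg (-α * u^2 + (β.re-1) * u)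
    nlinarith [Nat.one_le_iff_ne_zero.mpr (Nat.factorial_ne_zero p),
      Real.exp_nonneg (-α*u^2 + (β.re+1)*u)]
  · rw [show -u + (-α * u^2 + β.re * u) = -α*u^2 + (β.re-1)*u by ring]
    have := Real.exp_nonneg (-α * u^2 + (β.re+1) * u)
    nlinarith [Nat.one_le_iff_ne_zero.mpr (Nat.factorial_ne_zero p),
      Real.exp_nonneg (-α*u^2 + (β.re-1)*u)]

lemma integrand_integrable (α : ℝ) (hα : 0 < α) (β : ℂ) (p : ℕ) :
    Integrable (fun u : ℝ => (u:ℂ)^p * Complex.exp (-(α:ℂ) * u^2 + β * u)) := by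
  refine Integrable.mono'
    (g := fun u => (p.factorial : ℝ) * (Real.exp (-α * u^2 + (β.re+1) * u)
          + Real.exp (-α * u^2 + (β.re-1) * u)))
    (((real_exp_quad_integrable α hα _).add (real_exp_quad_integrable α hα _)).const_mul _)
    ?_ (Eventually.of_forall fun u => norm_bound p α β u)
  apply Continuous.aestronglyMeasurable
  fun_prop

lemma exp_quad_tendsto_top (α : ℝ) (hα : 0 < α) (c : ℝ) :
    Tendsto (fun u : ℝ => Real.exp (-α * u^2 + c * u)) atTop (𝓝 0) := by
  apply Real.tendsto_exp_atBot.comp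
  refine tendsto_atBot_mono' atTop ?_ tendsto_neg_atTop_atBot
  filter_upwards [eventually_ge_atTop (max 1 ((c+1)/α))] with u hu
  have h1 : (1:ℝ) ≤ u := le_trans (le_max_left _ _) hu
  have h2 : (c+1)/α ≤ u := le_trans (le_max_right _ _) hu
  rw [div_le_iff₀ hα] at h2
  show -α * u^2 + c*u ≤ -u
  nlinarith

lemma exp_quad_tendsto_bot (α : ℝ) (hα : 0 < α) (c : ℝ) :
    Tendsto (fun u : ℝ => Real.exp (-α * u^2 + c * u)) atBot (𝓝 0) := by
  have h := (exp_quad_tendsto_top α hα (-c)).comp tendsto_neg_atBot_atTop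
  refine h.congr fun u => ?_
  simp only [Function.comp_apply]
  congr 1
  ring

lemma integrand_tendsto (α : ℝ) (β : ℂ) (p : ℕ) {l : Filter ℝ}
    (h1 : Tendsto (fun u : ℝ => Real.exp (-α * u^2 + (β.re+1) * u)) l (𝓝 0))
    (h2 : Tendsto (fun u : ℝ => Real.exp (-α * u^2 + (β.re-1) * u)) l (𝓝 0)) :
    Tendsto (fun u : ℝ => (u:ℂ)^p * Complex.exp (-(α:ℂ) * u^2 + β * u)) l (𝓝 0) := by
  apply squeeze_zero_norm (fun u => norm_bound p α β u)
  have h : Tendsto (fun u : ℝ => (p.factorial : ℝ) *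
      (Real.exp (-α * u^2 + (β.re+1) * u) + Real.exp (-α * u^2 + (β.re-1) * u))) l
      (𝓝 ((p.factorial : ℝ) * (0 + 0))) := ((h1.add h2).const_mul _)
  simpa using h

lemma integral_hasDerivAt_eq_zero (f f' : ℝ → ℂ) (hd : ∀ x, HasDerivAt f (f' x) x)
    (hi : Integrable f') (ht : Tendsto f atTop (𝓝 0)) (hb : Tendsto f atBot (𝓝 0)) :
    ∫ x, f' x = 0 := by
  have h1 : ∫ x in Set.Ioi (0:ℝ), f' x = 0 - f 0 :=
    integral_Ioi_of_hasDerivAt_of_tendsto' (fun x _ => hd x) hi.integrableOn ht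
  have h2 : ∫ x in Set.Iic (0:ℝ), f' x = f 0 - 0 :=
    integral_Iic_of_hasDerivAt_of_tendsto' (fun x _ => hd x) hi.integrableOn hb
  rw [← intervalIntegral.integral_Iic_add_Ioi (b := (0:ℝ)) hi.integrableOn hi.integrableOn,
    h1, h2]
  ring

lemma hasDerivAt_integrand (α : ℝ) (β : ℂ) (p : ℕ) (u : ℝ) :
    HasDerivAt (fun u : ℝ => (u:ℂ)^p * Complex.exp (-(α:ℂ) * u^2 + β * u))
      ((p:ℂ) * ((u:ℂ)^(p-1) * Complex.exp (-(α:ℂ) * u^2 + β * u))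
        + β * ((u:ℂ)^p * Complex.exp (-(α:ℂ) * u^2 + β * u))
        - 2*(α:ℂ) * ((u:ℂ)^(p+1) * Complex.exp (-(α:ℂ) * u^2 + β * u))) u := by
  have hC : HasDerivAt (fun z : ℂ => z^p * Complex.exp (-(α:ℂ) * z^2 + β * z))
      ((p:ℂ) * ((u:ℂ)^(p-1) * Complex.exp (-(α:ℂ) * (u:ℂ)^2 + β * (u:ℂ)))
        + β * ((u:ℂ)^p * Complex.exp (-(α:ℂ) * (u:ℂ)^2 + β * (u:ℂ)))
        - 2*(α:ℂ) * ((u:ℂ)^(p+1) * Complex.exp (-(α:ℂ) * (u:ℂ)^2 + β * (u:ℂ)))) (u:ℂ) := by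
    have hq : HasDerivAt (fun z : ℂ => -(α:ℂ) * z^2 + β * z)
        (-(α:ℂ) * (2 * (u:ℂ)^1) + β * 1) (u:ℂ) :=
      ((hasDerivAt_pow 2 (u:ℂ)).const_mul (-(α:ℂ))).add ((hasDerivAt_id (u:ℂ)).const_mul β)
    have := (hasDerivAt_pow p (u:ℂ)).mul hq.cexp
    refine this.congr_deriv ?_
    rw [pow_succ]
    ring
  exact hC.comp_ofReal

lemma ibp (α : ℝ) (hα : 0 < α) (β : ℂ) (q : ℕ) :
    2*(α:ℂ) * ∫ u : ℝ, (u:ℂ)^(q+1) * Complex.exp (-(α:ℂ) * u^2 + β * u)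
      = β * (∫ u : ℝ, (u:ℂ)^q * Complex.exp (-(α:ℂ) * u^2 + β * u))
        + (q:ℂ) * ∫ u : ℝ, (u:ℂ)^(q-1) * Complex.exp (-(α:ℂ) * u^2 + β * u) := by
  have hint : ∀ r : ℕ, Integrable (fun u : ℝ => (u:ℂ)^r * Complex.exp (-(α:ℂ) * u^2 + β * u)) :=
    fun r => integrand_integrable α hα β r
  have hA : Integrable (fun u : ℝ => (q:ℂ) * ((u:ℂ)^(q-1) * Complex.exp (-(α:ℂ) * u^2 + β * u))) :=
    (hint (q-1)).const_mul (q:ℂ)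
  have hB : Integrable (fun u : ℝ => β * ((u:ℂ)^q * Complex.exp (-(α:ℂ) * u^2 + β * u))) :=
    (hint q).const_mul β
  have hC : Integrable (fun u : ℝ => 2*(α:ℂ) * ((u:ℂ)^(q+1) * Complex.exp (-(α:ℂ) * u^2 + β * u))) :=
    (hint (q+1)).const_mul (2*(α:ℂ))
  have hAB : Integrable (fun u : ℝ => (q:ℂ) * ((u:ℂ)^(q-1) * Complex.exp (-(α:ℂ) * u^2 + β * u))
      + β * ((u:ℂ)^q * Complex.exp (-(α:ℂ) * u^2 + β * u))) := hA.add hB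
  have hz : ∫ u : ℝ, ((q:ℂ) * ((u:ℂ)^(q-1) * Complex.exp (-(α:ℂ) * u^2 + β * u))
        + β * ((u:ℂ)^q * Complex.exp (-(α:ℂ) * u^2 + β * u))
        - 2*(α:ℂ) * ((u:ℂ)^(q+1) * Complex.exp (-(α:ℂ) * u^2 + β * u))) = 0 :=
    integral_hasDerivAt_eq_zero
      (fun u : ℝ => (u:ℂ)^q * Complex.exp (-(α:ℂ) * u^2 + β * u)) _
      (fun u => hasDerivAt_integrand α β q u)
      (hAB.sub hC)
      (integrand_tendsto α β q (exp_quad_tendsto_top α hα _) (exp_quad_tendsto_top α hα _))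
      (integrand_tendsto α β q (exp_quad_tendsto_bot α hα _) (exp_quad_tendsto_bot α hα _))
  rw [integral_sub hAB hC, integral_add hA hB,
    integral_const_mul, integral_const_mul, integral_const_mul] at hz
  linear_combination -hz

open Real in
lemma gauss_integral (α : ℝ) (hα : 0 < α) (β : ℂ) (p : ℕ) :
    ∫ u : ℝ, (u:ℂ)^p * Complex.exp (-(α:ℂ) * u^2 + β * u)
      = ((π:ℂ) / (α:ℂ)) ^ (1/2 : ℂ) * Complex.exp (β^2/(4*(α:ℂ)))
          * (Qp α p).eval β := by
  have h2α : (2*(α:ℂ)) ≠ 0 := by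
    simp only [ne_eq, mul_eq_zero]
    push_neg
    exact ⟨two_ne_zero, Complex.ofReal_ne_zero.mpr hα.ne'⟩
  induction p using Nat.strong_induction_on with
  | _ p ih =>
    match p with
    | 0 =>
      have hb : (-(α:ℂ)).re < 0 := by simpa using hα
      have h := integral_cexp_quadratic hb β 0
      simp only [add_zero] at h
      rw [show (fun u:ℝ => ((u:ℂ))^0 * Complex.exp (-(α:ℂ)*u^2+β*u))
          = fun u:ℝ => Complex.exp (-(α:ℂ)*u^2+β*u) from funext fun u => by
            rw [pow_zero, one_mul]]
      rw [h, neg_neg]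
      rw [show (4:ℂ) * -(α:ℂ) = -(4*(α:ℂ)) by ring, div_neg, sub_neg_eq_add, zero_add]
      simp [Qp]
    | 1 =>
      have h0 := ih 0 (by omega)
      have h := ibp α hα β 0
      simp only [Nat.cast_zero, zero_mul, add_zero, zero_add] at h
      rw [h0] at h
      have hQ0 : (Qp α 0).eval β = 1 := by rw [Qp]; simp
      rw [hQ0, mul_one] at h
      have hself : (∫ u : ℝ, (u:ℂ)^1 * Complex.exp (-(α:ℂ) * u^2 + β * u))
          = (2*(α:ℂ))⁻¹ * (2*(α:ℂ) * ∫ u : ℝ, (u:ℂ)^1 * Complex.exp (-(α:ℂ) * u^2 + β * u)) := by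
        rw [← mul_assoc, inv_mul_cancel₀ h2α, one_mul]
      rw [hself, h, Qp]
      simp only [Polynomial.eval_mul, Polynomial.eval_C, Polynomial.eval_X]
      ring
    | (q+2) =>
      have h1 := ih (q+1) (by omega)
      have h0 := ih q (by omega)
      have h := ibp α hα β (q+1)
      simp only [Nat.add_sub_cancel] at h
      push_cast at h
      rw [h1, h0] at h
      have hself : (∫ u : ℝ, (u:ℂ)^(q+1+1) * Complex.exp (-(α:ℂ) * u^2 + β * u))
          = (2*(α:ℂ))⁻¹ * (2*(α:ℂ) * ∫ u : ℝ, (u:ℂ)^(q+1+1) * Complex.exp (-(α:ℂ) * u^2 + β * u)) := by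
        rw [← mul_assoc, inv_mul_cancel₀ h2α, one_mul]
      rw [show q+2 = q+1+1 by omega, hself, h, Qp]
      simp only [Polynomial.eval_mul, Polynomial.eval_C, Polynomial.eval_add,
        Polynomial.eval_X]
      push_cast
      ring


/-! ### Indexing -/

def idx0 {n : ℕ} (k : Fin n) : Fin (2*n) := ⟨2 * k.val, by have := k.isLt; omega⟩
def idx1 {n : ℕ} (k : Fin n) : Fin (2*n) := ⟨2 * k.val + 1, by have := k.isLt; omega⟩
def half {n : ℕ} (j : Fin (2*n)) : Fin n := ⟨j.val / 2, by have := j.isLt; omega⟩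

lemma zc_eq {n : ℕ} (Z : Fin (2*n) → ℝ) (k : Fin n) :
    zc Z k = ((Z (idx0 k) : ℝ) : ℂ) + Complex.I * ((Z (idx1 k) : ℝ) : ℂ) := rfl

lemma half_idx0 {n : ℕ} (k : Fin n) : half (idx0 k) = k := by
  ext; simp only [half, idx0]; omega

lemma half_idx1 {n : ℕ} (k : Fin n) : half (idx1 k) = k := by
  ext; simp only [half, idx1]; omega

lemma mod_idx0 {n : ℕ} (k : Fin n) : ((idx0 k : Fin (2*n)) : ℕ) % 2 = 0 := by
  simp only [idx0]; omega

lemma mod_idx1 {n : ℕ} (k : Fin n) : ((idx1 k : Fin (2*n)) : ℕ) % 2 = 1 := by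
  simp only [idx1]; omega

def pairEquiv (n : ℕ) : Fin n × Fin 2 ≃ Fin (2*n) where
  toFun p := ⟨2 * p.1.val + p.2.val, by have := p.1.isLt; have := p.2.isLt; omega⟩
  invFun j := (half j, ⟨j.val % 2, by omega⟩)
  left_inv := by
    rintro ⟨⟨k, hk⟩, ⟨i, hi⟩⟩
    have h1 : (2*k+i)/2 = k := by omega
    have h2 : (2*k+i)%2 = i := by omega
    simp [half, Prod.ext_iff, Fin.ext_iff, h1, h2]
  right_inv := by
    rintro ⟨j, hj⟩
    simp only [half, Fin.ext_iff]
    omega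

lemma pairEquiv_zero {n : ℕ} (k : Fin n) : pairEquiv n (k, 0) = idx0 k := by
  simp [pairEquiv, idx0, Fin.ext_iff]

lemma pairEquiv_one {n : ℕ} (k : Fin n) : pairEquiv n (k, 1) = idx1 k := by
  simp [pairEquiv, idx1, Fin.ext_iff]

lemma prod_pair {n : ℕ} {M : Type*} [CommMonoid M] (g : Fin (2*n) → M) :
    ∏ j, g j = ∏ k : Fin n, (g (idx0 k) * g (idx1 k)) := by
  rw [← (pairEquiv n).prod_comp g, Fintype.prod_prod_type]
  refine Finset.prod_congr rfl fun k _ => ?_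
  rw [Fin.prod_univ_two, pairEquiv_zero, pairEquiv_one]

/-! ### Polynomial infrastructure -/

lemma eval_aeval {σ : Type*} (s : σ → ℂ) (b : MvPolynomial σ ℂ) (q : Polynomial ℂ) :
    MvPolynomial.eval s (Polynomial.aeval b q) = q.eval (MvPolynomial.eval s b) := by
  induction q using Polynomial.induction_on' with
  | add p q hp hq => simp [hp, hq]
  | monomial i c =>
    simp [Polynomial.aeval_monomial, MvPolynomial.algebraMap_eq]

lemma totalDegree_aeval_le {σ : Type*} (b : MvPolynomial σ ℂ) (hb : b.totalDegree ≤ 1)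
    (q : Polynomial ℂ) : (Polynomial.aeval b q).totalDegree ≤ q.natDegree := by
  rw [Polynomial.aeval_eq_sum_range]
  refine (MvPolynomial.totalDegree_finset_sum _ _).trans ?_
  refine Finset.sup_le fun i hi => ?_
  refine (MvPolynomial.totalDegree_smul_le _ _).trans ?_
  refine (MvPolynomial.totalDegree_pow _ _).trans ?_
  have h1 : i ≤ q.natDegree := by
    have := Finset.mem_range.mp hi; omega
  calc i * b.totalDegree ≤ i * 1 := Nat.mul_le_mul_left i hb
    _ ≤ q.natDegree := by omega

open MvPolynomial in
def bup {n : ℕ} (a : Fin n → ℝ) (k : Fin n) : MvPolynomial (Fin (2*n) ⊕ Fin (2*n)) ℂ :=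
  C ((a k : ℂ)/2) *
    (X (Sum.inl (idx0 k)) + C Complex.I * X (Sum.inl (idx1 k))
      + X (Sum.inr (idx0 k)) - C Complex.I * X (Sum.inr (idx1 k)))

open MvPolynomial in
def bvp {n : ℕ} (a : Fin n → ℝ) (k : Fin n) : MvPolynomial (Fin (2*n) ⊕ Fin (2*n)) ℂ :=
  C ((a k : ℂ)/2 * Complex.I) *
    (X (Sum.inr (idx0 k)) - C Complex.I * X (Sum.inr (idx1 k))
      - X (Sum.inl (idx0 k)) - C Complex.I * X (Sum.inl (idx1 k)))

def bp {n : ℕ} (a : Fin n → ℝ) (j : Fin (2*n)) : MvPolynomial (Fin (2*n) ⊕ Fin (2*n)) ℂ :=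
  if (j : ℕ) % 2 = 0 then bup a (half j) else bvp a (half j)

def βc {n : ℕ} (a : Fin n → ℝ) (Z Z' : Fin (2*n) → ℝ) (j : Fin (2*n)) : ℂ :=
  evalP (bp a j) Z Z'

lemma conj_zc {n : ℕ} (Z' : Fin (2*n) → ℝ) (k : Fin n) :
    (starRingEnd ℂ) (zc Z' k) = ((Z' (idx0 k) : ℝ) : ℂ) - Complex.I * ((Z' (idx1 k) : ℝ) : ℂ) := by
  rw [zc_eq]
  simp [map_add, map_mul, Complex.conj_ofReal, Complex.conj_I]
  ring

lemma evalP_bup {n : ℕ} (a : Fin n → ℝ) (Z Z' : Fin (2*n) → ℝ) (k : Fin n) :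
    evalP (bup a k) Z Z' = (a k : ℂ)/2 * (zc Z k + (starRingEnd ℂ) (zc Z' k)) := by
  rw [evalP, bup]
  simp only [map_mul, map_add, map_sub, MvPolynomial.eval_C, MvPolynomial.eval_X,
    Sum.elim_inl, Sum.elim_inr, zc_eq, Complex.conj_ofReal, Complex.conj_I]
  ring

lemma evalP_bvp {n : ℕ} (a : Fin n → ℝ) (Z Z' : Fin (2*n) → ℝ) (k : Fin n) :
    evalP (bvp a k) Z Z' = (a k : ℂ)/2 * Complex.I * ((starRingEnd ℂ) (zc Z' k) - zc Z k) := by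
  rw [evalP, bvp]
  simp only [map_mul, map_add, map_sub, MvPolynomial.eval_C, MvPolynomial.eval_X,
    Sum.elim_inl, Sum.elim_inr, zc_eq, Complex.conj_ofReal, Complex.conj_I]
  ring

lemma βc_idx0 {n : ℕ} (a : Fin n → ℝ) (Z Z' : Fin (2*n) → ℝ) (k : Fin n) :
    βc a Z Z' (idx0 k) = (a k : ℂ)/2 * (zc Z k + (starRingEnd ℂ) (zc Z' k)) := by
  rw [βc, bp, if_pos (mod_idx0 k), half_idx0, evalP_bup]

lemma βc_idx1 {n : ℕ} (a : Fin n → ℝ) (Z Z' : Fin (2*n) → ℝ) (k : Fin n) :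
    βc a Z Z' (idx1 k) = (a k : ℂ)/2 * Complex.I * ((starRingEnd ℂ) (zc Z' k) - zc Z k) := by
  rw [βc, bp, if_neg (by rw [mod_idx1]; omega), half_idx1, evalP_bvp]

open MvPolynomial in
lemma bup_deg {n : ℕ} (a : Fin n → ℝ) (k : Fin n) : (bup a k).totalDegree ≤ 1 := by
  have hCX : ∀ s : Fin (2*n) ⊕ Fin (2*n),
      ((C Complex.I : MvPolynomial (Fin (2*n) ⊕ Fin (2*n)) ℂ) * X s).totalDegree ≤ 1 := fun s =>
    (totalDegree_mul _ _).trans (by rw [totalDegree_C, totalDegree_X])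
  have hX : ∀ s : Fin (2*n) ⊕ Fin (2*n),
      ((X s : MvPolynomial (Fin (2*n) ⊕ Fin (2*n)) ℂ)).totalDegree ≤ 1 := fun s =>
    le_of_eq (totalDegree_X s)
  refine (totalDegree_mul _ _).trans ?_
  rw [totalDegree_C, zero_add]
  refine (totalDegree_sub _ _).trans (max_le ?_ (hCX _))
  refine (totalDegree_add _ _).trans (max_le ?_ (hX _))
  exact (totalDegree_add _ _).trans (max_le (hX _) (hCX _))

open MvPolynomial in
lemma bvp_deg {n : ℕ} (a : Fin n → ℝ) (k : Fin n) : (bvp a k).totalDegree ≤ 1 := by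
  have hCX : ∀ s : Fin (2*n) ⊕ Fin (2*n),
      ((C Complex.I : MvPolynomial (Fin (2*n) ⊕ Fin (2*n)) ℂ) * X s).totalDegree ≤ 1 := fun s =>
    (totalDegree_mul _ _).trans (by rw [totalDegree_C, totalDegree_X])
  have hX : ∀ s : Fin (2*n) ⊕ Fin (2*n),
      ((X s : MvPolynomial (Fin (2*n) ⊕ Fin (2*n)) ℂ)).totalDegree ≤ 1 := fun s =>
    le_of_eq (totalDegree_X s)
  refine (totalDegree_mul _ _).trans ?_
  rw [totalDegree_C, zero_add]
  refine (totalDegree_sub _ _).trans (max_le ?_ (hCX _))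
  refine (totalDegree_sub _ _).trans (max_le ?_ (hX _))
  exact (totalDegree_sub _ _).trans (max_le (hX _) (hCX _))

lemma bp_deg {n : ℕ} (a : Fin n → ℝ) (j : Fin (2*n)) : (bp a j).totalDegree ≤ 1 := by
  rw [bp]; split
  · exact bup_deg a (half j)
  · exact bvp_deg a (half j)


/-! ### Bergman kernel factorization -/

lemma normSq_zc {n : ℕ} (Z : Fin (2*n) → ℝ) (k : Fin n) :
    ((Complex.normSq (zc Z k) : ℝ) : ℂ)
      = ((Z (idx0 k) : ℝ) : ℂ)^2 + ((Z (idx1 k) : ℝ) : ℂ)^2 := by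
  rw [zc_eq, mul_comm Complex.I, Complex.normSq_add_mul_I]
  push_cast
  ring

lemma exp_aux {n : ℕ} (a : Fin n → ℝ) (Z Z' W : Fin (2*n) → ℝ) (k : Fin n) :
    -(1/4:ℂ) * (((a k : ℝ) : ℂ) *
        (((Complex.normSq (zc Z k) : ℝ) : ℂ) + ((Complex.normSq (zc W k) : ℝ) : ℂ) -
          2 * zc Z k * (starRingEnd ℂ) (zc W k)))
      + -(1/4:ℂ) * (((a k : ℝ) : ℂ) *
        (((Complex.normSq (zc W k) : ℝ) : ℂ) + ((Complex.normSq (zc Z' k) : ℝ) : ℂ) -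
          2 * zc W k * (starRingEnd ℂ) (zc Z' k)))
    = -(1/4:ℂ) * (((a k : ℝ) : ℂ) *
        (((Complex.normSq (zc Z k) : ℝ) : ℂ) + ((Complex.normSq (zc Z' k) : ℝ) : ℂ) -
          2 * zc Z k * (starRingEnd ℂ) (zc Z' k)))
      + (-((a k:ℂ)/2) * (zc Z k * (starRingEnd ℂ) (zc Z' k))
        + ((-(↑(a k/2) : ℂ) * (W (idx0 k) : ℝ)^2 + βc a Z Z' (idx0 k) * (W (idx0 k) : ℝ))
          + (-(↑(a k/2) : ℂ) * (W (idx1 k) : ℝ)^2 + βc a Z Z' (idx1 k) * (W (idx1 k) : ℝ)))) := by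
  rw [βc_idx0, βc_idx1, normSq_zc W k, conj_zc W k, zc_eq W k]
  push_cast
  ring

lemma prod_exp_pair {n : ℕ} (e : Fin n → ℂ) (f : Fin n → ℂ) :
    ∏ k : Fin n, (Complex.exp (e k) * Complex.exp (f k))
      = Complex.exp (∑ k, (e k + f k)) := by
  rw [Complex.exp_sum]
  exact Finset.prod_congr rfl fun k _ => (Complex.exp_add _ _).symm

lemma berg_factor {n : ℕ} (a : Fin n → ℝ) (Z Z' W : Fin (2*n) → ℝ) :
    berg a Z W * berg a W Z' =
      (berg a Z Z' * ∏ k : Fin n, ((a k : ℂ) / (2*(Real.pi:ℂ))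
          * Complex.exp (-((a k:ℂ)/2) * (zc Z k * (starRingEnd ℂ) (zc Z' k)))))
        * ∏ j : Fin (2*n), Complex.exp
            (-(↑(a (half j)/2) : ℂ) * (W j : ℝ)^2 + βc a Z Z' j * (W j : ℝ)) := by
  have hpp := prod_pair (n := n) (g := fun j => Complex.exp
      (-(↑(a (half j)/2) : ℂ) * (W j : ℝ)^2 + βc a Z Z' j * (W j : ℝ)))
  simp only [half_idx0, half_idx1] at hpp
  rw [hpp, berg, berg, berg]
  rw [Finset.prod_mul_distrib, ← Complex.exp_sum, prod_exp_pair]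
  have hc : (∏ k : Fin n, ((a k : ℂ) / (2*(Real.pi:ℂ))))
      = (((2 * Real.pi) ^ n : ℝ) : ℂ)⁻¹ * (∏ j, ((a j : ℝ) : ℂ)) := by
    rw [Finset.prod_div_distrib, Finset.prod_const, Finset.card_univ, Fintype.card_fin]
    push_cast
    ring
  rw [hc]
  have hexp : (-(1/4:ℂ) * ∑ k, ((a k : ℝ) : ℂ) *
        (((Complex.normSq (zc Z k) : ℝ) : ℂ) + ((Complex.normSq (zc W k) : ℝ) : ℂ) -
          2 * zc Z k * (starRingEnd ℂ) (zc W k)))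
      + (-(1/4:ℂ) * ∑ k, ((a k : ℝ) : ℂ) *
        (((Complex.normSq (zc W k) : ℝ) : ℂ) + ((Complex.normSq (zc Z' k) : ℝ) : ℂ) -
          2 * zc W k * (starRingEnd ℂ) (zc Z' k)))
      = (-(1/4:ℂ) * ∑ k, ((a k : ℝ) : ℂ) *
        (((Complex.normSq (zc Z k) : ℝ) : ℂ) + ((Complex.normSq (zc Z' k) : ℝ) : ℂ) -
          2 * zc Z k * (starRingEnd ℂ) (zc Z' k)))
      + ((∑ k, -((a k:ℂ)/2) * (zc Z k * (starRingEnd ℂ) (zc Z' k)))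
        + (∑ k, ((-(↑(a k/2) : ℂ) * (W (idx0 k) : ℝ)^2 + βc a Z Z' (idx0 k) * (W (idx0 k) : ℝ))
          + (-(↑(a k/2) : ℂ) * (W (idx1 k) : ℝ)^2 + βc a Z Z' (idx1 k) * (W (idx1 k) : ℝ))))) := by
    rw [Finset.mul_sum, Finset.mul_sum, Finset.mul_sum,
      ← Finset.sum_add_distrib, ← Finset.sum_add_distrib, ← Finset.sum_add_distrib]
    exact Finset.sum_congr rfl fun k _ => exp_aux a Z Z' W k
  calc _ = ((((2 * Real.pi) ^ n : ℝ) : ℂ)⁻¹ * (∏ j, ((a j : ℝ) : ℂ))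
          * ((((2 * Real.pi) ^ n : ℝ) : ℂ)⁻¹ * (∏ j, ((a j : ℝ) : ℂ))))
        * Complex.exp ((-(1/4:ℂ) * ∑ k, ((a k : ℝ) : ℂ) *
            (((Complex.normSq (zc Z k) : ℝ) : ℂ) + ((Complex.normSq (zc W k) : ℝ) : ℂ) -
              2 * zc Z k * (starRingEnd ℂ) (zc W k)))
          + (-(1/4:ℂ) * ∑ k, ((a k : ℝ) : ℂ) *
            (((Complex.normSq (zc W k) : ℝ) : ℂ) + ((Complex.normSq (zc Z' k) : ℝ) : ℂ) -
              2 * zc W k * (starRingEnd ℂ) (zc Z' k)))) := by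
        rw [Complex.exp_add]; ring
    _ = _ := by
        rw [hexp, Complex.exp_add, Complex.exp_add]
        ring


/-! ### Cancellation of Gaussian prefactors -/

lemma base_cancel {n : ℕ} (a : Fin n → ℝ) (ha : ∀ j, 0 < a j) (Z Z' : Fin (2*n) → ℝ) :
    (∏ k : Fin n, ((a k : ℂ) / (2*(Real.pi:ℂ))
        * Complex.exp (-((a k:ℂ)/2) * (zc Z k * (starRingEnd ℂ) (zc Z' k)))))
      * ∏ j : Fin (2*n), (((Real.pi:ℂ) / (↑(a (half j)/2) : ℂ)) ^ (1/2:ℂ)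
          * Complex.exp ((βc a Z Z' j)^2 / (4 * (↑(a (half j)/2) : ℂ)))) = 1 := by
  have hpp := prod_pair (n := n) (g := fun j => ((Real.pi:ℂ) / (↑(a (half j)/2) : ℂ)) ^ (1/2:ℂ)
      * Complex.exp ((βc a Z Z' j)^2 / (4 * (↑(a (half j)/2) : ℂ))))
  simp only [half_idx0, half_idx1] at hpp
  rw [hpp, ← Finset.prod_mul_distrib]
  refine Finset.prod_eq_one fun k _ => ?_
  have ha0 : (a k : ℂ) ≠ 0 := Complex.ofReal_ne_zero.mpr (ha k).ne'
  have hπ : ((Real.pi : ℝ) : ℂ) ≠ 0 := Complex.ofReal_ne_zero.mpr Real.pi_ne_zero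
  have hhalf : ((a k/2 : ℝ) : ℂ) = (a k : ℂ)/2 := by push_cast; ring
  rw [hhalf]
  have hx : ((Real.pi:ℂ) / ((a k:ℂ)/2)) ≠ 0 :=
    div_ne_zero hπ (by simpa using ha0)
  have hcpow : ((Real.pi:ℂ)/((a k:ℂ)/2))^(1/2:ℂ) * ((Real.pi:ℂ)/((a k:ℂ)/2))^(1/2:ℂ)
      = (Real.pi:ℂ)/((a k:ℂ)/2) := by
    rw [← Complex.cpow_add _ _ hx]
    norm_num
  have hβ : (βc a Z Z' (idx0 k))^2 + (βc a Z Z' (idx1 k))^2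
      = (a k:ℂ)^2 * (zc Z k * (starRingEnd ℂ) (zc Z' k)) := by
    rw [βc_idx0, βc_idx1]
    linear_combination (((a k:ℂ)/2)^2 * ((starRingEnd ℂ) (zc Z' k) - zc Z k)^2) * Complex.I_sq
  have hsum : (βc a Z Z' (idx0 k))^2 / (4 * ((a k:ℂ)/2))
        + (βc a Z Z' (idx1 k))^2 / (4 * ((a k:ℂ)/2))
      = (a k:ℂ)/2 * (zc Z k * (starRingEnd ℂ) (zc Z' k)) := by
    rw [← add_div, hβ]
    field_simp
    ring
  calc (a k : ℂ) / (2*(Real.pi:ℂ))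
          * Complex.exp (-((a k:ℂ)/2) * (zc Z k * (starRingEnd ℂ) (zc Z' k)))
        * (((Real.pi:ℂ)/((a k:ℂ)/2))^(1/2:ℂ)
            * Complex.exp ((βc a Z Z' (idx0 k))^2 / (4 * ((a k:ℂ)/2)))
          * (((Real.pi:ℂ)/((a k:ℂ)/2))^(1/2:ℂ)
            * Complex.exp ((βc a Z Z' (idx1 k))^2 / (4 * ((a k:ℂ)/2)))))
      = ((a k : ℂ) / (2*(Real.pi:ℂ))
          * (((Real.pi:ℂ)/((a k:ℂ)/2))^(1/2:ℂ) * ((Real.pi:ℂ)/((a k:ℂ)/2))^(1/2:ℂ)))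
        * (Complex.exp (-((a k:ℂ)/2) * (zc Z k * (starRingEnd ℂ) (zc Z' k)))
          * (Complex.exp ((βc a Z Z' (idx0 k))^2 / (4 * ((a k:ℂ)/2)))
            * Complex.exp ((βc a Z Z' (idx1 k))^2 / (4 * ((a k:ℂ)/2))))) := by ring
    _ = ((a k : ℂ) / (2*(Real.pi:ℂ)) * ((Real.pi:ℂ)/((a k:ℂ)/2)))
        * Complex.exp (-((a k:ℂ)/2) * (zc Z k * (starRingEnd ℂ) (zc Z' k))
            + ((βc a Z Z' (idx0 k))^2 / (4 * ((a k:ℂ)/2))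
              + (βc a Z Z' (idx1 k))^2 / (4 * ((a k:ℂ)/2)))) := by
        rw [hcpow, ← Complex.exp_add, ← Complex.exp_add]
    _ = 1 := by
        rw [hsum, show -((a k:ℂ)/2) * (zc Z k * (starRingEnd ℂ) (zc Z' k))
            + (a k:ℂ)/2 * (zc Z k * (starRingEnd ℂ) (zc Z' k)) = 0 by ring,
          Complex.exp_zero, mul_one]
        field_simp

/-! ### Expansion of polynomial evaluations -/

lemma evalP_expand {n : ℕ} (K : MvPolynomial (Fin (2*n) ⊕ Fin (2*n)) ℂ)
    (Z W : Fin (2*n) → ℝ) :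
    evalP K Z W = ∑ m ∈ K.support, K.coeff m *
      ((∏ j, ((Z j : ℝ):ℂ)^(m (Sum.inl j))) * ∏ j, ((W j : ℝ):ℂ)^(m (Sum.inr j))) := by
  rw [evalP, MvPolynomial.eval_eq']
  refine Finset.sum_congr rfl fun m _ => ?_
  rw [Fintype.prod_sum_type]
  simp

/-! ### The composed polynomial -/

def K3term {n : ℕ} (a : Fin n → ℝ) (m₁ m₂ : (Fin (2*n) ⊕ Fin (2*n)) →₀ ℕ) (c : ℂ) :
    MvPolynomial (Fin (2*n) ⊕ Fin (2*n)) ℂ :=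
  MvPolynomial.C c * ((∏ j, MvPolynomial.X (Sum.inl j) ^ (m₁ (Sum.inl j)))
      * ∏ j, MvPolynomial.X (Sum.inr j) ^ (m₂ (Sum.inr j)))
    * ∏ j : Fin (2*n), Polynomial.aeval (bp a j)
        (Qp (a (half j)/2) (m₁ (Sum.inr j) + m₂ (Sum.inl j)))

lemma evalP_K3term {n : ℕ} (a : Fin n → ℝ) (m₁ m₂ : (Fin (2*n) ⊕ Fin (2*n)) →₀ ℕ) (c : ℂ)
    (Z Z' : Fin (2*n) → ℝ) :
    evalP (K3term a m₁ m₂ c) Z Z'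
      = c * ((∏ j, ((Z j : ℝ):ℂ)^(m₁ (Sum.inl j))) * ∏ j, ((Z' j : ℝ):ℂ)^(m₂ (Sum.inr j)))
        * ∏ j : Fin (2*n), (Qp (a (half j)/2) (m₁ (Sum.inr j) + m₂ (Sum.inl j))).eval
            (βc a Z Z' j) := by
  rw [evalP, K3term]
  simp only [map_mul, map_prod, map_pow, MvPolynomial.eval_C, MvPolynomial.eval_X,
    Sum.elim_inl, Sum.elim_inr, eval_aeval]
  rfl

lemma K3term_deg {n : ℕ} (a : Fin n → ℝ) (m₁ m₂ : (Fin (2*n) ⊕ Fin (2*n)) →₀ ℕ) (c : ℂ) :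
    (K3term a m₁ m₂ c).totalDegree
      ≤ ((∑ j, m₁ (Sum.inl j)) + ∑ j, m₂ (Sum.inr j))
        + ∑ j : Fin (2*n), (m₁ (Sum.inr j) + m₂ (Sum.inl j)) := by
  refine (MvPolynomial.totalDegree_mul _ _).trans ?_
  have hXpow : ∀ (s : Fin (2*n) ⊕ Fin (2*n)) (e : ℕ),
      ((MvPolynomial.X s : MvPolynomial (Fin (2*n) ⊕ Fin (2*n)) ℂ) ^ e).totalDegree ≤ e :=
    fun s e => (MvPolynomial.totalDegree_pow _ _).trans
      (by rw [MvPolynomial.totalDegree_X, mul_one])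
  have h1 : (MvPolynomial.C c * ((∏ j, MvPolynomial.X (Sum.inl j) ^ (m₁ (Sum.inl j)))
      * ∏ j, MvPolynomial.X (Sum.inr j) ^ (m₂ (Sum.inr j))) :
        MvPolynomial (Fin (2*n) ⊕ Fin (2*n)) ℂ).totalDegree
      ≤ (∑ j, m₁ (Sum.inl j)) + ∑ j, m₂ (Sum.inr j) := by
    refine (MvPolynomial.totalDegree_mul _ _).trans ?_
    rw [MvPolynomial.totalDegree_C, zero_add]
    refine (MvPolynomial.totalDegree_mul _ _).trans ?_
    gcongr
    · exact (MvPolynomial.totalDegree_finset_prod _ _).trans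
        (Finset.sum_le_sum fun j _ => hXpow _ _)
    · exact (MvPolynomial.totalDegree_finset_prod _ _).trans
        (Finset.sum_le_sum fun j _ => hXpow _ _)
  have h2 : (∏ j : Fin (2*n), Polynomial.aeval (bp a j)
        (Qp (a (half j)/2) (m₁ (Sum.inr j) + m₂ (Sum.inl j)))).totalDegree
      ≤ ∑ j : Fin (2*n), (m₁ (Sum.inr j) + m₂ (Sum.inl j)) := by
    refine (MvPolynomial.totalDegree_finset_prod _ _).trans ?_
    refine Finset.sum_le_sum fun j _ => ?_
    exact (totalDegree_aeval_le (bp a j) (bp_deg a j) _).trans (Qp_natDegree _ _)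
  omega

/-! ### Pointwise expansion of the integrand -/

lemma integrand_expand {n : ℕ} (a : Fin n → ℝ)
    (K₁ K₂ : MvPolynomial (Fin (2*n) ⊕ Fin (2*n)) ℂ) (Z Z' W : Fin (2*n) → ℝ) :
    evalP K₁ Z W * berg a Z W * evalP K₂ W Z' * berg a W Z'
      = ∑ pr ∈ K₁.support ×ˢ K₂.support,
          (K₁.coeff pr.1 * K₂.coeff pr.2
            * ((∏ j, ((Z j : ℝ):ℂ)^(pr.1 (Sum.inl j))) * ∏ j, ((Z' j : ℝ):ℂ)^(pr.2 (Sum.inr j)))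
            * (berg a Z Z' * ∏ k : Fin n, ((a k : ℂ) / (2*(Real.pi:ℂ))
                * Complex.exp (-((a k:ℂ)/2) * (zc Z k * (starRingEnd ℂ) (zc Z' k))))))
          * ∏ j : Fin (2*n), (((W j : ℝ):ℂ)^(pr.1 (Sum.inr j) + pr.2 (Sum.inl j))
              * Complex.exp (-(↑(a (half j)/2) : ℂ) * (W j : ℝ)^2
                  + βc a Z Z' j * (W j : ℝ))) := by
  rw [show evalP K₁ Z W * berg a Z W * evalP K₂ W Z' * berg a W Z'
      = evalP K₁ Z W * evalP K₂ W Z' * (berg a Z W * berg a W Z') by ring]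
  rw [berg_factor, evalP_expand K₁ Z W, evalP_expand K₂ W Z', Finset.sum_mul_sum,
    Finset.sum_product]
  rw [Finset.sum_mul]
  refine Finset.sum_congr rfl fun m₁ _ => ?_
  rw [Finset.sum_mul]
  refine Finset.sum_congr rfl fun m₂ _ => ?_
  have hW : (∏ j, ((W j : ℝ):ℂ)^(m₁ (Sum.inr j))) * (∏ j, ((W j : ℝ):ℂ)^(m₂ (Sum.inl j)))
      * ∏ j : Fin (2*n), Complex.exp (-(↑(a (half j)/2) : ℂ) * (W j : ℝ)^2
          + βc a Z Z' j * (W j : ℝ))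
      = ∏ j : Fin (2*n), (((W j : ℝ):ℂ)^(m₁ (Sum.inr j) + m₂ (Sum.inl j))
          * Complex.exp (-(↑(a (half j)/2) : ℂ) * (W j : ℝ)^2
              + βc a Z Z' j * (W j : ℝ))) := by
    rw [← Finset.prod_mul_distrib, ← Finset.prod_mul_distrib]
    refine Finset.prod_congr rfl fun j _ => ?_
    rw [pow_add]
  rw [← hW]
  ring


/-! ### Value of each term's integral -/

lemma term_integrable {n : ℕ} (a : Fin n → ℝ) (ha : ∀ j, 0 < a j) (Z Z' : Fin (2*n) → ℝ)
    (m₁ m₂ : (Fin (2*n) ⊕ Fin (2*n)) →₀ ℕ) (c : ℂ) :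
    Integrable (fun W : Fin (2*n) → ℝ =>
      (c * ((∏ j, ((Z j : ℝ):ℂ)^(m₁ (Sum.inl j))) * ∏ j, ((Z' j : ℝ):ℂ)^(m₂ (Sum.inr j)))
        * (berg a Z Z' * ∏ k : Fin n, ((a k : ℂ) / (2*(Real.pi:ℂ))
            * Complex.exp (-((a k:ℂ)/2) * (zc Z k * (starRingEnd ℂ) (zc Z' k))))))
      * ∏ j : Fin (2*n), (((W j : ℝ):ℂ)^(m₁ (Sum.inr j) + m₂ (Sum.inl j))
          * Complex.exp (-(↑(a (half j)/2) : ℂ) * (W j : ℝ)^2 + βc a Z Z' j * (W j : ℝ)))) := by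
  have hα : ∀ j : Fin (2*n), (0:ℝ) < a (half j)/2 := fun j => by
    have := ha (half j); linarith
  exact (Integrable.fintype_prod
    (f := fun (j : Fin (2*n)) (t : ℝ) => ((t : ℝ):ℂ)^(m₁ (Sum.inr j) + m₂ (Sum.inl j))
      * Complex.exp (-(↑(a (half j)/2) : ℂ) * (t : ℝ)^2 + βc a Z Z' j * (t : ℝ)))
    (fun j => integrand_integrable _ (hα j) _ _)).const_mul _

lemma term_integral {n : ℕ} (a : Fin n → ℝ) (ha : ∀ j, 0 < a j) (Z Z' : Fin (2*n) → ℝ)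
    (m₁ m₂ : (Fin (2*n) ⊕ Fin (2*n)) →₀ ℕ) (c : ℂ) :
    ∫ W : Fin (2*n) → ℝ,
      (c * ((∏ j, ((Z j : ℝ):ℂ)^(m₁ (Sum.inl j))) * ∏ j, ((Z' j : ℝ):ℂ)^(m₂ (Sum.inr j)))
        * (berg a Z Z' * ∏ k : Fin n, ((a k : ℂ) / (2*(Real.pi:ℂ))
            * Complex.exp (-((a k:ℂ)/2) * (zc Z k * (starRingEnd ℂ) (zc Z' k))))))
      * ∏ j : Fin (2*n), (((W j : ℝ):ℂ)^(m₁ (Sum.inr j) + m₂ (Sum.inl j))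
          * Complex.exp (-(↑(a (half j)/2) : ℂ) * (W j : ℝ)^2 + βc a Z Z' j * (W j : ℝ)))
    = evalP (K3term a m₁ m₂ c) Z Z' * berg a Z Z' := by
  have hα : ∀ j : Fin (2*n), (0:ℝ) < a (half j)/2 := fun j => by
    have := ha (half j); linarith
  rw [MeasureTheory.integral_const_mul]
  have hfub := MeasureTheory.integral_fintype_prod_eq_prod (ι := Fin (2*n)) (μ := fun _ => volume)
    (f := fun (j : Fin (2*n)) (t : ℝ) => ((t : ℝ):ℂ)^(m₁ (Sum.inr j) + m₂ (Sum.inl j))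
      * Complex.exp (-(↑(a (half j)/2) : ℂ) * (t : ℝ)^2 + βc a Z Z' j * (t : ℝ)))
  rw [← MeasureTheory.volume_pi] at hfub
  rw [hfub]
  have hval : ∀ j : Fin (2*n),
      (∫ t : ℝ, ((t : ℝ):ℂ)^(m₁ (Sum.inr j) + m₂ (Sum.inl j))
        * Complex.exp (-(↑(a (half j)/2) : ℂ) * (t : ℝ)^2 + βc a Z Z' j * (t : ℝ)))
      = ((Real.pi:ℂ) / (↑(a (half j)/2) : ℂ)) ^ (1/2:ℂ)
          * Complex.exp ((βc a Z Z' j)^2 / (4 * (↑(a (half j)/2) : ℂ)))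
        * (Qp (a (half j)/2) (m₁ (Sum.inr j) + m₂ (Sum.inl j))).eval (βc a Z Z' j) :=
    fun j => gauss_integral (a (half j)/2) (hα j) (βc a Z Z' j) _
  rw [Finset.prod_congr rfl fun j _ => hval j]
  rw [show (∏ j : Fin (2*n), (((Real.pi:ℂ) / (↑(a (half j)/2) : ℂ)) ^ (1/2:ℂ)
        * Complex.exp ((βc a Z Z' j)^2 / (4 * (↑(a (half j)/2) : ℂ)))
        * (Qp (a (half j)/2) (m₁ (Sum.inr j) + m₂ (Sum.inl j))).eval (βc a Z Z' j)))
      = (∏ j : Fin (2*n), (((Real.pi:ℂ) / (↑(a (half j)/2) : ℂ)) ^ (1/2:ℂ)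
          * Complex.exp ((βc a Z Z' j)^2 / (4 * (↑(a (half j)/2) : ℂ)))))
        * ∏ j : Fin (2*n), (Qp (a (half j)/2) (m₁ (Sum.inr j) + m₂ (Sum.inl j))).eval
            (βc a Z Z' j)
    from Finset.prod_mul_distrib]
  rw [evalP_K3term]
  have hbc := base_cancel a ha Z Z'
  linear_combination (c * ((∏ j, ((Z j : ℝ):ℂ)^(m₁ (Sum.inl j)))
      * ∏ j, ((Z' j : ℝ):ℂ)^(m₂ (Sum.inr j))) * berg a Z Z'
    * ∏ j : Fin (2*n), (Qp (a (half j)/2) (m₁ (Sum.inr j) + m₂ (Sum.inl j))).eval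
        (βc a Z Z' j)) * hbc

end S16

/-- The polynomial-times-Bergman kernels form a filtered algebra under
composition: `∫ K₁(Z,W)𝒫(Z,W) K₂(W,Z')𝒫(W,Z') dW = K₃(Z,Z')𝒫(Z,Z')` with
`deg K₃ ≤ deg K₁ + deg K₂`, the integral converging absolutely. -/
theorem stmt16 (n : ℕ) (hn : 1 ≤ n) (a : Fin n → ℝ) (ha : ∀ j, 0 < a j)
    (K₁ K₂ : MvPolynomial (Fin (2*n) ⊕ Fin (2*n)) ℂ) :
    (∀ Z Z' : Fin (2*n) → ℝ,
      Integrable (fun W => evalP K₁ Z W * berg a Z W * evalP K₂ W Z' * berg a W Z')) ∧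
    ∃ K₃ : MvPolynomial (Fin (2*n) ⊕ Fin (2*n)) ℂ,
      K₃.totalDegree ≤ K₁.totalDegree + K₂.totalDegree ∧
      ∀ Z Z' : Fin (2*n) → ℝ,
        (∫ W, evalP K₁ Z W * berg a Z W * evalP K₂ W Z' * berg a W Z') =
          evalP K₃ Z Z' * berg a Z Z' := by
  classical
  constructor
  · intro Z Z'
    rw [show (fun W : Fin (2*n) → ℝ =>
        evalP K₁ Z W * berg a Z W * evalP K₂ W Z' * berg a W Z')
      = fun W => ∑ pr ∈ K₁.support ×ˢ K₂.support,
          (K₁.coeff pr.1 * K₂.coeff pr.2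
            * ((∏ j, ((Z j : ℝ):ℂ)^(pr.1 (Sum.inl j))) * ∏ j, ((Z' j : ℝ):ℂ)^(pr.2 (Sum.inr j)))
            * (berg a Z Z' * ∏ k : Fin n, ((a k : ℂ) / (2*(Real.pi:ℂ))
                * Complex.exp (-((a k:ℂ)/2) * (zc Z k * (starRingEnd ℂ) (zc Z' k))))))
          * ∏ j : Fin (2*n), (((W j : ℝ):ℂ)^(pr.1 (Sum.inr j) + pr.2 (Sum.inl j))
              * Complex.exp (-(↑(a (S16.half j)/2) : ℂ) * (W j : ℝ)^2
                  + S16.βc a Z Z' j * (W j : ℝ)))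
      from funext fun W => S16.integrand_expand a K₁ K₂ Z Z' W]
    exact integrable_finset_sum _ (fun pr _ => S16.term_integrable a ha Z Z' pr.1 pr.2 _)
  · refine ⟨∑ pr ∈ K₁.support ×ˢ K₂.support,
      S16.K3term a pr.1 pr.2 (K₁.coeff pr.1 * K₂.coeff pr.2), ?_, ?_⟩
    · refine (MvPolynomial.totalDegree_finset_sum _ _).trans (Finset.sup_le ?_)
      rintro ⟨m₁, m₂⟩ hpr
      rw [Finset.mem_product] at hpr
      have h1 := MvPolynomial.le_totalDegree hpr.1
      have h2 := MvPolynomial.le_totalDegree hpr.2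
      rw [Finsupp.sum_fintype _ _ (fun _ => rfl), Fintype.sum_sum_type] at h1 h2
      dsimp only at h1 h2
      refine (S16.K3term_deg a m₁ m₂ _).trans ?_
      rw [Finset.sum_add_distrib]
      omega
    · intro Z Z'
      rw [show (fun W : Fin (2*n) → ℝ =>
          evalP K₁ Z W * berg a Z W * evalP K₂ W Z' * berg a W Z')
        = fun W => ∑ pr ∈ K₁.support ×ˢ K₂.support,
            (K₁.coeff pr.1 * K₂.coeff pr.2
              * ((∏ j, ((Z j : ℝ):ℂ)^(pr.1 (Sum.inl j))) * ∏ j, ((Z' j : ℝ):ℂ)^(pr.2 (Sum.inr j)))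
              * (berg a Z Z' * ∏ k : Fin n, ((a k : ℂ) / (2*(Real.pi:ℂ))
                  * Complex.exp (-((a k:ℂ)/2) * (zc Z k * (starRingEnd ℂ) (zc Z' k))))))
            * ∏ j : Fin (2*n), (((W j : ℝ):ℂ)^(pr.1 (Sum.inr j) + pr.2 (Sum.inl j))
                * Complex.exp (-(↑(a (S16.half j)/2) : ℂ) * (W j : ℝ)^2
                    + S16.βc a Z Z' j * (W j : ℝ)))
        from funext fun W => S16.integrand_expand a K₁ K₂ Z Z' W]
      rw [integral_finset_sum _ (fun pr _ => S16.term_integrable a ha Z Z' pr.1 pr.2 _)]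
      rw [show evalP (∑ pr ∈ K₁.support ×ˢ K₂.support,
          S16.K3term a pr.1 pr.2 (K₁.coeff pr.1 * K₂.coeff pr.2)) Z Z'
        = ∑ pr ∈ K₁.support ×ˢ K₂.support,
            evalP (S16.K3term a pr.1 pr.2 (K₁.coeff pr.1 * K₂.coeff pr.2)) Z Z'
        from by simp [evalP, map_sum], Finset.sum_mul]
      exact Finset.sum_congr rfl fun pr _ => S16.term_integral a ha Z Z' pr.1 pr.2 _
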